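/- Let (Nᵢ)_{i=0}^n be a square-integrable martingale with N₀ = 0 relative to a filtration (𝒢ᵢ), and define Wᵢ = Σ_{j=1}^i ( E[(N_j − N_{j−1})² | 𝒢_{j−1}] + (N_j − N_{j−1})² ) and Uᵢ = exp(ξNᵢ − (ξ²/2)Wᵢ) for ξ > 0. Then (Uᵢ) is a supermartingale: E[Uᵢ | 𝒢_{i−1}] ≤ U_{i−1} for each 1 ≤ i ≤ n. -/

import Mathlib

open MeasureTheory

lemma half_aux (x : ℝ) : x - x ^ 2 / 2 ≤ 1 / 2 := by
  nlinarith [sq_nonneg (x - 1)]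

lemma exp_quad_aux (x : ℝ) : Real.exp (x - x ^ 2 / 2) ≤ 1 + x + x ^ 2 / 2 := by
  have hf : ∀ y : ℝ, HasDerivAt (fun t : ℝ => (1 + t + t ^ 2 / 2) * Real.exp (t ^ 2 / 2 - t))
      ((y * (y ^ 2 + y + 2) / 2) * Real.exp (y ^ 2 / 2 - y)) y := by
    intro y
    have h1 : HasDerivAt (fun t : ℝ => 1 + t + t ^ 2 / 2) (1 + y) y := by
      have := ((hasDerivAt_id y).const_add (1 : ℝ)).add ((hasDerivAt_pow 2 y).div_const 2)
      exact this.congr_deriv (by push_cast; ring)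
    have h2 : HasDerivAt (fun t : ℝ => t ^ 2 / 2 - t) (y - 1) y := by
      have := ((hasDerivAt_pow 2 y).div_const 2).sub (hasDerivAt_id y)
      exact this.congr_deriv (by push_cast; ring)
    have := h1.mul h2.exp
    exact this.congr_deriv (by ring)
  have hdiff : Differentiable ℝ (fun t : ℝ => (1 + t + t ^ 2 / 2) * Real.exp (t ^ 2 / 2 - t)) :=
    fun y => (hf y).differentiableAt
  have key : ∀ y : ℝ, (1 : ℝ) ≤ (1 + y + y ^ 2 / 2) * Real.exp (y ^ 2 / 2 - y) := by
    intro y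
    have hzero : (fun t : ℝ => (1 + t + t ^ 2 / 2) * Real.exp (t ^ 2 / 2 - t)) 0 = 1 := by
      norm_num
    rcases le_total 0 y with hy | hy
    · have hmono : MonotoneOn (fun t : ℝ => (1 + t + t ^ 2 / 2) * Real.exp (t ^ 2 / 2 - t))
          (Set.Ici 0) := by
        apply monotoneOn_of_deriv_nonneg (convex_Ici 0) hdiff.continuous.continuousOn
          (hdiff.differentiableOn)
        intro t ht
        rw [(hf t).deriv]
        have h2 : 0 ≤ t := le_of_lt (by simpa using ht)
        have : 0 ≤ t * (t ^ 2 + t + 2) / 2 := by nlinarith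
        positivity
      calc (1:ℝ) = _ := hzero.symm
        _ ≤ _ := hmono (Set.self_mem_Ici) hy hy
    · have hanti : AntitoneOn (fun t : ℝ => (1 + t + t ^ 2 / 2) * Real.exp (t ^ 2 / 2 - t))
          (Set.Iic 0) := by
        apply antitoneOn_of_deriv_nonpos (convex_Iic 0) hdiff.continuous.continuousOn
          (hdiff.differentiableOn)
        intro t ht
        rw [(hf t).deriv]
        have h2 : t ≤ 0 := le_of_lt (by simpa using ht)
        have hq : 0 ≤ t ^ 2 + t + 2 := by nlinarith [sq_nonneg (2 * t + 1)]
        have : t * (t ^ 2 + t + 2) / 2 ≤ 0 := by nlinarith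
        exact mul_nonpos_of_nonpos_of_nonneg this (Real.exp_pos _).le
      calc (1:ℝ) = _ := hzero.symm
        _ ≤ _ := hanti hy Set.self_mem_Iic hy
  have hpos := Real.exp_pos (x ^ 2 / 2 - x)
  have h' : Real.exp (x - x ^ 2 / 2) = (Real.exp (x ^ 2 / 2 - x))⁻¹ := by
    rw [← Real.exp_neg]; ring_nf
  rw [h']
  exact le_of_mul_le_mul_right (by rw [inv_mul_cancel₀ hpos.ne']; exact key x) hpos

theorem exp_process_supermartingale {Ω : Type*} {m0 : MeasurableSpace Ω}
    (μ : Measure Ω) [IsProbabilityMeasure μ] (𝒢 : Filtration ℕ m0)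
    (n : ℕ) (N : ℕ → Ω → ℝ) (hN : Martingale N 𝒢 μ) (hN0 : N 0 = 0)
    (hL2 : ∀ i, MemLp (N i) 2 μ)
    (W : ℕ → Ω → ℝ)
    (hW : ∀ i ω, W i ω = ∑ j ∈ Finset.Icc 1 i,
      ((μ[fun ω' => (N j ω' - N (j - 1) ω') ^ 2 | 𝒢 (j - 1)]) ω
        + (N j ω - N (j - 1) ω) ^ 2))
    (ξ : ℝ) (hξ : 0 < ξ)
    (U : ℕ → Ω → ℝ)
    (hU : ∀ i ω, U i ω = Real.exp (ξ * N i ω - ξ ^ 2 / 2 * W i ω)) :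
    ∀ i, 1 ≤ i → i ≤ n →
      (μ[U i | 𝒢 (i - 1)]) ≤ᵐ[μ] U (i - 1) := by
  -- measurability of N
  have hNmeas : ∀ j, StronglyMeasurable[𝒢 j] (N j) := fun j => hN.stronglyAdapted j
  -- measurability of W
  have hWmeas : ∀ j, StronglyMeasurable[𝒢 j] (W j) := by
    intro j
    have h : StronglyMeasurable[𝒢 j] (fun ω => ∑ l ∈ Finset.Icc 1 j,
        ((μ[fun ω' => (N l ω' - N (l - 1) ω') ^ 2 | 𝒢 (l - 1)]) ω
          + (N l ω - N (l - 1) ω) ^ 2)) := by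
      apply Finset.stronglyMeasurable_fun_sum
      intro l hl
      have hl' : l ≤ j := (Finset.mem_Icc.mp hl).2
      have hl'' : l - 1 ≤ j := le_trans (Nat.sub_le l 1) hl'
      have h1 : StronglyMeasurable[𝒢 j]
          (μ[fun ω' => (N l ω' - N (l - 1) ω') ^ 2 | 𝒢 (l - 1)]) :=
        stronglyMeasurable_condExp.mono (𝒢.mono hl'')
      have h2 : StronglyMeasurable[𝒢 j] (fun ω => (N l ω - N (l - 1) ω) ^ 2) := by
        exact (continuous_pow 2).comp_stronglyMeasurable
          (((hNmeas l).mono (𝒢.mono hl')).sub ((hNmeas (l - 1)).mono (𝒢.mono hl'')))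
      exact h1.add h2
    have hWe : W j = fun ω => ∑ l ∈ Finset.Icc 1 j,
        ((μ[fun ω' => (N l ω' - N (l - 1) ω') ^ 2 | 𝒢 (l - 1)]) ω
          + (N l ω - N (l - 1) ω) ^ 2) := funext (hW j)
    rw [hWe]; exact h
  -- measurability of U
  have hUmeas : ∀ j, StronglyMeasurable[𝒢 j] (U j) := by
    intro j
    have hUe : U j = fun ω => Real.exp (ξ * N j ω - ξ ^ 2 / 2 * W j ω) := funext (hU j)
    rw [hUe]
    exact Real.continuous_exp.comp_stronglyMeasurable
      (((hNmeas j).const_mul ξ).sub ((hWmeas j).const_mul (ξ ^ 2 / 2)))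
  have hUpos : ∀ j ω, 0 < U j ω := by
    intro j ω; rw [hU]; exact Real.exp_pos _
  -- splitting identity
  have hsplit : ∀ j ω, U (j + 1) ω =
      U j ω * Real.exp (-(ξ ^ 2 / 2) * (μ[fun ω' => (N (j + 1) ω' - N j ω') ^ 2 | 𝒢 j]) ω)
        * Real.exp (ξ * (N (j + 1) ω - N j ω) - ξ ^ 2 / 2 * (N (j + 1) ω - N j ω) ^ 2) := by
    intro j ω
    rw [hU, hU, hW, hW, Finset.sum_Icc_succ_top (Nat.one_le_iff_ne_zero.mpr (Nat.succ_ne_zero j)),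
      ← Real.exp_add, ← Real.exp_add]
    simp only [Nat.add_sub_cancel]
    congr 1
    ring
  -- a.e. bound on U j
  have hUb : ∀ j, ∀ᵐ ω ∂μ, U j ω ≤ Real.exp ((j : ℝ) * (1 / 2)) := by
    intro j
    induction j with
    | zero =>
      refine ae_of_all _ fun ω => ?_
      rw [hU, hW, hN0]
      simp
    | succ j ih =>
      have hc : (0 : Ω → ℝ) ≤ᵐ[μ] μ[fun ω' => (N (j + 1) ω' - N j ω') ^ 2 | 𝒢 j] :=
        condExp_nonneg (ae_of_all _ fun ω => sq_nonneg _)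
      filter_upwards [ih, hc] with ω hω hcω
      rw [hsplit j ω]
      have h1 : Real.exp (-(ξ ^ 2 / 2) * (μ[fun ω' => (N (j + 1) ω' - N j ω') ^ 2 | 𝒢 j]) ω)
          ≤ 1 := by
        rw [Real.exp_le_one_iff]
        have := hcω
        simp only [Pi.zero_apply] at this
        nlinarith [sq_nonneg ξ]
      have h2 : Real.exp (ξ * (N (j + 1) ω - N j ω) - ξ ^ 2 / 2 * (N (j + 1) ω - N j ω) ^ 2)
          ≤ Real.exp (1 / 2) := by
        apply Real.exp_le_exp.mpr
        nlinarith [sq_nonneg (ξ * (N (j + 1) ω - N j ω) - 1)]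
      calc U j ω * Real.exp (-(ξ ^ 2 / 2) * (μ[fun ω' => (N (j + 1) ω' - N j ω') ^ 2 | 𝒢 j]) ω)
            * Real.exp (ξ * (N (j + 1) ω - N j ω) - ξ ^ 2 / 2 * (N (j + 1) ω - N j ω) ^ 2)
          ≤ Real.exp ((j : ℝ) * (1 / 2)) * 1 * Real.exp (1 / 2) := by
            apply mul_le_mul _ h2 (Real.exp_pos _).le (by positivity)
            apply mul_le_mul hω h1 (Real.exp_pos _).le (Real.exp_pos _).le
        _ = Real.exp (((j : ℝ) + 1) * (1 / 2)) := by
            rw [mul_one, ← Real.exp_add]; ring_nf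
        _ = Real.exp (((j + 1 : ℕ) : ℝ) * (1 / 2)) := by push_cast; ring_nf
  -- integrability of U j
  have hUint : ∀ j, Integrable (U j) μ := by
    intro j
    apply Integrable.mono' (integrable_const (Real.exp ((j : ℝ) * (1 / 2))))
      ((hUmeas j).mono (𝒢.le j)).aestronglyMeasurable
    filter_upwards [hUb j] with ω hω
    rw [Real.norm_eq_abs, abs_of_pos (hUpos j ω)]
    exact hω
  -- main argument
  intro i hi1 _
  obtain ⟨k, rfl⟩ : ∃ k, i = k + 1 := ⟨i - 1, (Nat.succ_pred_eq_of_pos hi1).symm⟩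
  simp only [Nat.add_sub_cancel]
  set D : Ω → ℝ := fun ω => N (k + 1) ω - N k ω with hD
  set c : Ω → ℝ := μ[fun ω' => (N (k + 1) ω' - N k ω') ^ 2 | 𝒢 k] with hc
  set V : Ω → ℝ := fun ω => Real.exp (ξ * D ω - ξ ^ 2 / 2 * D ω ^ 2) with hV
  set A : Ω → ℝ := fun ω => U k ω * Real.exp (-(ξ ^ 2 / 2) * c ω) with hA
  have hDl2 : MemLp D 2 μ := (hL2 (k + 1)).sub (hL2 k)
  have hDint : Integrable D μ := hDl2.integrable one_le_two
  have hD2int : Integrable (fun ω => D ω ^ 2) μ := hDl2.integrable_sq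
  have hDmeas : StronglyMeasurable[𝒢 (k + 1)] D :=
    (hNmeas (k + 1)).sub ((hNmeas k).mono (𝒢.mono (Nat.le_succ k)))
  have hVm0 : StronglyMeasurable[𝒢 (k + 1)] (fun ω => ξ * D ω - ξ ^ 2 / 2 * D ω ^ 2) :=
    (hDmeas.const_mul ξ).sub
      (((continuous_pow 2).comp_stronglyMeasurable hDmeas).const_mul (ξ ^ 2 / 2))
  have hVmeas : AEStronglyMeasurable V μ :=
    (Real.continuous_exp.comp_stronglyMeasurable
      (hVm0.mono (𝒢.le (k + 1)))).aestronglyMeasurable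
  have hVpos : ∀ ω, 0 < V ω := fun ω => Real.exp_pos _
  have hVle : ∀ ω, V ω ≤ Real.exp (1 / 2) := by
    intro ω
    simp only [hV]
    apply Real.exp_le_exp.mpr
    have e : ξ * D ω - ξ ^ 2 / 2 * D ω ^ 2 = (ξ * D ω) - (ξ * D ω) ^ 2 / 2 := by ring
    rw [e]
    exact half_aux _
  have hVbound : ∀ ω, V ω ≤ 1 + ξ * D ω + ξ ^ 2 / 2 * D ω ^ 2 := by
    intro ω
    have h := exp_quad_aux (ξ * D ω)
    have e1 : ξ * D ω - (ξ * D ω) ^ 2 / 2 = ξ * D ω - ξ ^ 2 / 2 * D ω ^ 2 := by ring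
    have e2 : 1 + ξ * D ω + (ξ * D ω) ^ 2 / 2 = 1 + ξ * D ω + ξ ^ 2 / 2 * D ω ^ 2 := by ring
    rw [e1, e2] at h
    exact h
  have hVint : Integrable V μ := by
    apply Integrable.mono' (integrable_const (Real.exp (1 / 2))) hVmeas
    refine ae_of_all _ fun ω => ?_
    rw [Real.norm_eq_abs, abs_of_pos (hVpos ω)]
    exact hVle ω
  have hAmeas : StronglyMeasurable[𝒢 k] A :=
    (hUmeas k).mul (Real.continuous_exp.comp_stronglyMeasurable
      (stronglyMeasurable_condExp.const_mul _))
  have hAV : U (k + 1) = A * V := funext fun ω => hsplit k ω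
  -- pull-out
  have h1 : μ[U (k + 1) | 𝒢 k] =ᵐ[μ] A * μ[V | 𝒢 k] := by
    rw [hAV]
    exact condExp_mul_of_stronglyMeasurable_left hAmeas (hAV ▸ hUint (k + 1)) hVint
  -- conditional expectation of V
  have hD0 : μ[D | 𝒢 k] =ᵐ[μ] 0 := by
    have ha : μ[N (k + 1) | 𝒢 k] =ᵐ[μ] N k := hN.condExp_ae_eq (Nat.le_succ k)
    have hb : μ[N k | 𝒢 k] = N k :=
      condExp_of_stronglyMeasurable (𝒢.le k) (hNmeas k) (hN.integrable k)
    have hs : μ[D | 𝒢 k] =ᵐ[μ] μ[N (k + 1) | 𝒢 k] - μ[N k | 𝒢 k] :=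
      condExp_sub (hN.integrable (k + 1)) (hN.integrable k) _
    filter_upwards [ha, hs] with ω h1 h3
    simp only [Pi.sub_apply, Pi.zero_apply] at *
    rw [h3, h1, congrFun hb ω, sub_self]
  have hP : μ[(fun ω => 1 + ξ * D ω + ξ ^ 2 / 2 * D ω ^ 2) | 𝒢 k] =ᵐ[μ]
      fun ω => 1 + ξ * (μ[D | 𝒢 k]) ω + ξ ^ 2 / 2 * c ω := by
    have hpe : (fun ω => 1 + ξ * D ω + ξ ^ 2 / 2 * D ω ^ 2) =
        ((fun _ => (1 : ℝ)) + ξ • D) + (ξ ^ 2 / 2) • (fun ω => D ω ^ 2) := by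
      funext ω
      simp only [Pi.add_apply, Pi.smul_apply, smul_eq_mul]
    rw [hpe]
    have ha := condExp_add (f := (fun _ => (1:ℝ)) + ξ • D)
      (g := (ξ ^ 2 / 2) • (fun ω => D ω ^ 2))
      ((integrable_const 1).add (hDint.smul ξ)) (hD2int.smul (ξ ^ 2 / 2)) (m := 𝒢 k)
    have hb := condExp_add (f := (fun _ : Ω => (1:ℝ))) (g := ξ • D)
      (integrable_const 1) (hDint.smul ξ) (m := 𝒢 k)
    have hc1 : μ[(fun _ : Ω => (1:ℝ)) | 𝒢 k] = fun _ => (1:ℝ) := condExp_const (𝒢.le k) (1 : ℝ)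
    have hs1 := condExp_smul (μ := μ) (m := 𝒢 k) ξ D
    have hs2 := condExp_smul (μ := μ) (m := 𝒢 k) (ξ ^ 2 / 2) (fun ω => D ω ^ 2)
    have hceq : c = μ[(fun ω => D ω ^ 2) | 𝒢 k] := rfl
    filter_upwards [ha, hb, hs1, hs2] with ω e1 e2 e4 e5
    simp only [Pi.add_apply] at e1 e2
    rw [e1, e2, congrFun hc1 ω]
    simp only [Pi.smul_apply, smul_eq_mul] at e4 e5
    rw [e4, e5, hceq]
  have h2 : μ[V | 𝒢 k] ≤ᵐ[μ] fun ω => 1 + ξ ^ 2 / 2 * c ω := by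
    have hm : μ[V | 𝒢 k] ≤ᵐ[μ] μ[(fun ω => 1 + ξ * D ω + ξ ^ 2 / 2 * D ω ^ 2) | 𝒢 k] :=
      condExp_mono hVint
        ((integrable_const 1).add ((hDint.const_mul ξ).add (hD2int.const_mul (ξ ^ 2 / 2))) |>.congr
          (ae_of_all _ fun ω => by simp [Pi.add_apply]; ring))
        (ae_of_all _ hVbound)
    filter_upwards [hm, hP, hD0] with ω e1 e2 e3
    rw [e2] at e1
    simp only [Pi.zero_apply] at e3
    rw [e3] at e1
    simpa using e1
  -- conclude
  filter_upwards [h1, h2] with ω e1 e2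
  have hA_nonneg : 0 ≤ A ω := by
    rw [hA]
    exact mul_nonneg (hUpos k ω).le (Real.exp_pos _).le
  calc (μ[U (k + 1) | 𝒢 k]) ω = A ω * (μ[V | 𝒢 k]) ω := e1
    _ ≤ A ω * Real.exp (ξ ^ 2 / 2 * c ω) := by
        apply mul_le_mul_of_nonneg_left _ hA_nonneg
        exact e2.trans (by linarith [Real.add_one_le_exp (ξ ^ 2 / 2 * c ω)])
    _ = U k ω := by
        rw [hA]
        rw [mul_assoc, ← Real.exp_add, neg_mul, neg_add_cancel, Real.exp_zero, mul_one]
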